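/- Smoothing sandwich and Lipschitz continuity (part of Lemma on the smoothed function). If F : ℝ^D → ℝ is convex and M₂-Lipschitz with respect to the Euclidean norm (|F(y) − F(x)| ≤ M₂‖y − x‖ for all x, y), then for every x ∈ ℝ^D one has F(x) ≤ F_γ(x) ≤ F(x) + γM₂, and moreover F_γ is M₂-Lipschitz: |F_γ(y) − F_γ(x)| ≤ M₂‖y − x‖ for all x, y ∈ ℝ^D. -/

import Mathlib

open MeasureTheory
open scoped ENNReal

noncomputable section

/-- The uniform probability distribution on the closed Euclidean unit ball of `ℝ^D`
(normalized restriction of Lebesgue measure). -/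
def uniformBall (D : ℕ) : Measure (EuclideanSpace ℝ (Fin D)) :=
  (volume (Metric.closedBall (0 : EuclideanSpace ℝ (Fin D)) 1))⁻¹ •
    volume.restrict (Metric.closedBall (0 : EuclideanSpace ℝ (Fin D)) 1)

/-- The smoothed function `F_γ(x) := E[F(x + γ ẽ)]`, with `ẽ` uniform on the closed
Euclidean unit ball. -/
def smoothed (D : ℕ) (F : EuclideanSpace ℝ (Fin D) → ℝ) (γ : ℝ)
    (x : EuclideanSpace ℝ (Fin D)) : ℝ :=
  ∫ u, F (x + γ • u) ∂(uniformBall D)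

/-- Smoothing sandwich and Lipschitz continuity: if `F : ℝ^D → ℝ` is convex and
`M₂`-Lipschitz in the Euclidean norm, then `F(x) ≤ F_γ(x) ≤ F(x) + γ M₂` for every `x`,
and `F_γ` is `M₂`-Lipschitz. -/
theorem smoothing_sandwich_and_lipschitz
    (D : ℕ) (hD : 0 < D) (γ : ℝ) (hγ : 0 < γ)
    (F : EuclideanSpace ℝ (Fin D) → ℝ) (M₂ : ℝ)
    (hconv : ConvexOn ℝ Set.univ F)
    (hlip : ∀ x y : EuclideanSpace ℝ (Fin D), |F y - F x| ≤ M₂ * ‖y - x‖) :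
    (∀ x, F x ≤ smoothed D F γ x ∧ smoothed D F γ x ≤ F x + γ * M₂) ∧
      (∀ x y, |smoothed D F γ y - smoothed D F γ x| ≤ M₂ * ‖y - x‖) := by
  classical
  set B := Metric.closedBall (0 : EuclideanSpace ℝ (Fin D)) 1 with hB
  have hBco : IsCompact B := isCompact_closedBall _ _
  have hBm : MeasurableSet B := measurableSet_closedBall
  have hvol0 : volume B ≠ 0 :=
    (Metric.measure_closedBall_pos volume (0 : EuclideanSpace ℝ (Fin D)) one_pos).ne'
  have hvolt : volume B ≠ ⊤ := hBco.measure_lt_top.ne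
  have hinvt : (volume B)⁻¹ ≠ ⊤ := by simp [hvol0]
  have hprob : IsProbabilityMeasure (uniformBall D) := ⟨by
    simp only [uniformBall, Measure.smul_apply, Measure.restrict_apply MeasurableSet.univ,
      Set.univ_inter, smul_eq_mul]
    exact ENNReal.inv_mul_cancel hvol0 hvolt⟩
  -- M₂ is nonnegative
  have hM : 0 ≤ M₂ := by
    have he : ‖(EuclideanSpace.single (⟨0, hD⟩ : Fin D) (1 : ℝ) :
        EuclideanSpace ℝ (Fin D))‖ = 1 := by
      simp [EuclideanSpace.norm_single]
    have h := hlip 0 (EuclideanSpace.single (⟨0, hD⟩ : Fin D) (1 : ℝ))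
    rw [sub_zero, he, mul_one] at h
    exact le_trans (abs_nonneg _) h
  -- F is continuous
  have hFc : Continuous F := by
    have : LipschitzWith (Real.toNNReal M₂) F := by
      refine LipschitzWith.of_dist_le_mul fun x y => ?_
      rw [Real.dist_eq, Real.coe_toNNReal _ hM, dist_eq_norm]
      exact hlip y x
    exact this.continuous
  -- a.e. membership in ball
  have hae : ∀ᵐ u ∂(uniformBall D), u ∈ B :=
    Measure.ae_smul_measure (ae_restrict_mem hBm) _
  -- integrability
  have hint : ∀ x : EuclideanSpace ℝ (Fin D),
      Integrable (fun u => F (x + γ • u)) (uniformBall D) := by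
    intro x
    have hc : Continuous fun u : EuclideanSpace ℝ (Fin D) => F (x + γ • u) :=
      hFc.comp (continuous_const.add (continuous_const_smul γ))
    exact (hc.continuousOn.integrableOn_compact hBco).smul_measure hinvt
  have hidB : Integrable (fun u : EuclideanSpace ℝ (Fin D) => u) (volume.restrict B) :=
    continuous_id.continuousOn.integrableOn_compact hBco
  have hidμ : Integrable (fun u : EuclideanSpace ℝ (Fin D) => u) (uniformBall D) :=
    hidB.smul_measure hinvt
  -- center of mass
  have hBneg : (Neg.neg ⁻¹' B : Set (EuclideanSpace ℝ (Fin D))) = B := by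
    ext u
    simp [hB, Metric.mem_closedBall, dist_zero_right]
  have hmap : (volume.restrict B).map Neg.neg = volume.restrict B := by
    have h1 : ((volume : Measure (EuclideanSpace ℝ (Fin D))).map Neg.neg).restrict B
        = (volume.restrict (Neg.neg ⁻¹' B)).map Neg.neg :=
      Measure.restrict_map measurable_neg hBm
    rw [Measure.map_neg_eq_self, hBneg] at h1
    exact h1.symm
  have hIB : ∫ u, u ∂(volume.restrict B) = 0 := by
    have h1 : ∫ u, u ∂(volume.restrict B) = ∫ u, -u ∂(volume.restrict B) := by
      conv_lhs => rw [← hmap]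
      rw [integral_map measurable_neg.aemeasurable]
      exact (hmap ▸ hidB.aestronglyMeasurable : AEStronglyMeasurable _ _)
    have h3 : ∫ u, u ∂(volume.restrict B) = -∫ u, u ∂(volume.restrict B) :=
      h1.trans (integral_neg _)
    have h4 : (2 : ℝ) • ∫ u, u ∂(volume.restrict B) = 0 := by
      rw [two_smul]
      nth_rewrite 1 [h3]
      abel
    rcases smul_eq_zero.mp h4 with h | h
    · norm_num at h
    · exact h
  have hcenter : ∫ u, u ∂(uniformBall D) = 0 := by
    unfold uniformBall
    rw [integral_smul_measure, hIB, smul_zero]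
  have hγid : Integrable (fun u : EuclideanSpace ℝ (Fin D) => γ • u) (uniformBall D) :=
    hidμ.smul γ
  have hmean : ∀ x : EuclideanSpace ℝ (Fin D),
      ∫ u, (x + γ • u) ∂(uniformBall D) = x := by
    intro x
    rw [integral_add (integrable_const x) hγid, integral_const, integral_smul, hcenter,
      smul_zero, add_zero, probReal_univ, one_smul]
  constructor
  · intro x
    constructor
    · -- Jensen
      have hxint : Integrable (fun u : EuclideanSpace ℝ (Fin D) => x + γ • u) (uniformBall D) :=
        (integrable_const x).add hγid
      have h := hconv.map_integral_le hFc.continuousOn isClosed_univ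
        (Filter.Eventually.of_forall fun _ => Set.mem_univ _) hxint (hint x)
      rw [hmean x] at h
      exact h
    · have hbound : ∀ᵐ u ∂(uniformBall D), F (x + γ • u) - F x ≤ γ * M₂ := by
        filter_upwards [hae] with u hu
        have h1 : |F (x + γ • u) - F x| ≤ M₂ * ‖x + γ • u - x‖ := hlip x _
        have h2 : ‖x + γ • u - x‖ = γ * ‖u‖ := by
          rw [add_sub_cancel_left, norm_smul, Real.norm_eq_abs, abs_of_pos hγ]
        have h3 : ‖u‖ ≤ 1 := by simpa [hB, Metric.mem_closedBall, dist_zero_right] using hu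
        calc F (x + γ • u) - F x ≤ |F (x + γ • u) - F x| := le_abs_self _
          _ ≤ M₂ * (γ * ‖u‖) := by rwa [h2] at h1
          _ ≤ M₂ * (γ * 1) := by
              apply mul_le_mul_of_nonneg_left _ hM
              exact mul_le_mul_of_nonneg_left h3 hγ.le
          _ = γ * M₂ := by ring
      have h4 : ∫ u, (F (x + γ • u) - F x) ∂(uniformBall D) ≤ ∫ _u, γ * M₂ ∂(uniformBall D) :=
        integral_mono_ae ((hint x).sub (integrable_const _)) (integrable_const _) hbound
      rw [integral_sub (hint x) (integrable_const _), integral_const, integral_const,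
        probReal_univ, one_smul, one_smul] at h4
      have h5 : smoothed D F γ x - F x ≤ γ * M₂ := h4
      linarith
  · intro x y
    have heq : smoothed D F γ y - smoothed D F γ x
        = ∫ u, (F (y + γ • u) - F (x + γ • u)) ∂(uniformBall D) :=
      (integral_sub (hint y) (hint x)).symm
    rw [heq]
    have h1 : |∫ u, (F (y + γ • u) - F (x + γ • u)) ∂(uniformBall D)|
        ≤ ∫ u, |F (y + γ • u) - F (x + γ • u)| ∂(uniformBall D) := by
      simpa [Real.norm_eq_abs] using
        norm_integral_le_integral_norm (fun u => F (y + γ • u) - F (x + γ • u)) (μ := uniformBall D)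
    refine h1.trans ?_
    have h2 : ∀ u : EuclideanSpace ℝ (Fin D),
        |F (y + γ • u) - F (x + γ • u)| ≤ M₂ * ‖y - x‖ := by
      intro u
      have h := hlip (x + γ • u) (y + γ • u)
      have hs : (y + γ • u) - (x + γ • u) = y - x := by abel
      rwa [hs] at h
    have h3 : ∫ u, |F (y + γ • u) - F (x + γ • u)| ∂(uniformBall D)
        ≤ ∫ _u, M₂ * ‖y - x‖ ∂(uniformBall D) :=
      integral_mono (((hint y).sub (hint x)).abs) (integrable_const _) h2
    rw [integral_const, probReal_univ, one_smul] at h3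
    exact h3
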